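/- Let P1, P2, P3, P4 be noncoplanar points in ℝ³ ordered so that V = det[[1,1,1,1],[x1,x2,x3,x4],[y1,y2,y3,y4],[z1,z2,z3,z4]] > 0, and let P* = (x*, y*, z*) be a point distinct from each P_j. For j = 1, …, 4 let V_j be the determinant obtained by replacing the j-th column of the above 4×4 matrix by the column (1, x*, y*, z*)ᵀ, and set m_j* = |P*P_j|·V_j. Then the function F(x,y,z) = Σ_{j=1}^4 m_j* √((x−x_j)² + (y−y_j)² + (z−z_j)²) has a stationary point at P*, i.e. Σ_{j=1}^4 m_j* (x* − x_j)/|P*P_j| = 0, Σ_{j=1}^4 m_j* (y* − y_j)/|P*P_j| = 0, and Σ_{j=1}^4 m_j* (z* − z_j)/|P*P_j| = 0. -/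

import Mathlib

set_option maxHeartbeats 2000000 in
lemma det4 (a b c d e f g h i j k l m n o p : ℝ) :
    Matrix.det !![a,b,c,d; e,f,g,h; i,j,k,l; m,n,o,p] =
      a*(f*(k*p-l*o) - g*(j*p-l*n) + h*(j*o-k*n))
      - b*(e*(k*p-l*o) - g*(i*p-l*m) + h*(i*o-k*m))
      + c*(e*(j*p-l*n) - f*(i*p-l*m) + h*(i*n-j*m))
      - d*(e*(j*o-k*n) - f*(i*o-k*m) + g*(i*n-j*m)) := by
  rw [Matrix.det_succ_row_zero]
  simp [Fin.sum_univ_succ, Matrix.det_fin_three, Matrix.submatrix_apply, Fin.succAbove,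
    Fin.castSucc, Fin.castAdd, Fin.castLE]
  ring

set_option maxHeartbeats 2000000 in
/-- 3D inverse Fermat–Torricelli problem: with the weights `m_j* = |P*P_j|·V_j`,
the function `F` has a stationary point at `P*`. -/
theorem inverse_problem_stationary_3d
    (x1 y1 z1 x2 y2 z2 x3 y3 z3 x4 y4 z4 xs ys zs : ℝ)
    (hV : 0 < Matrix.det !![(1:ℝ), 1, 1, 1; x1, x2, x3, x4;
        y1, y2, y3, y4; z1, z2, z3, z4])
    (hne1 : (xs, ys, zs) ≠ (x1, y1, z1))
    (hne2 : (xs, ys, zs) ≠ (x2, y2, z2))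
    (hne3 : (xs, ys, zs) ≠ (x3, y3, z3))
    (hne4 : (xs, ys, zs) ≠ (x4, y4, z4))
    (m1 m2 m3 m4 : ℝ)
    (hm1 : m1 = Real.sqrt ((xs-x1)^2 + (ys-y1)^2 + (zs-z1)^2)
        * Matrix.det !![(1:ℝ), 1, 1, 1; xs, x2, x3, x4;
            ys, y2, y3, y4; zs, z2, z3, z4])
    (hm2 : m2 = Real.sqrt ((xs-x2)^2 + (ys-y2)^2 + (zs-z2)^2)
        * Matrix.det !![(1:ℝ), 1, 1, 1; x1, xs, x3, x4;
            y1, ys, y3, y4; z1, zs, z3, z4])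
    (hm3 : m3 = Real.sqrt ((xs-x3)^2 + (ys-y3)^2 + (zs-z3)^2)
        * Matrix.det !![(1:ℝ), 1, 1, 1; x1, x2, xs, x4;
            y1, y2, ys, y4; z1, z2, zs, z4])
    (hm4 : m4 = Real.sqrt ((xs-x4)^2 + (ys-y4)^2 + (zs-z4)^2)
        * Matrix.det !![(1:ℝ), 1, 1, 1; x1, x2, x3, xs;
            y1, y2, y3, ys; z1, z2, z3, zs]) :
    (m1*(xs-x1)/Real.sqrt ((xs-x1)^2 + (ys-y1)^2 + (zs-z1)^2)
      + m2*(xs-x2)/Real.sqrt ((xs-x2)^2 + (ys-y2)^2 + (zs-z2)^2)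
      + m3*(xs-x3)/Real.sqrt ((xs-x3)^2 + (ys-y3)^2 + (zs-z3)^2)
      + m4*(xs-x4)/Real.sqrt ((xs-x4)^2 + (ys-y4)^2 + (zs-z4)^2) = 0) ∧
    (m1*(ys-y1)/Real.sqrt ((xs-x1)^2 + (ys-y1)^2 + (zs-z1)^2)
      + m2*(ys-y2)/Real.sqrt ((xs-x2)^2 + (ys-y2)^2 + (zs-z2)^2)
      + m3*(ys-y3)/Real.sqrt ((xs-x3)^2 + (ys-y3)^2 + (zs-z3)^2)
      + m4*(ys-y4)/Real.sqrt ((xs-x4)^2 + (ys-y4)^2 + (zs-z4)^2) = 0) ∧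
    (m1*(zs-z1)/Real.sqrt ((xs-x1)^2 + (ys-y1)^2 + (zs-z1)^2)
      + m2*(zs-z2)/Real.sqrt ((xs-x2)^2 + (ys-y2)^2 + (zs-z2)^2)
      + m3*(zs-z3)/Real.sqrt ((xs-x3)^2 + (ys-y3)^2 + (zs-z3)^2)
      + m4*(zs-z4)/Real.sqrt ((xs-x4)^2 + (ys-y4)^2 + (zs-z4)^2) = 0) := by

  have key : ∀ a b c d e f : ℝ, (a,b,c) ≠ (d,e,f) →
      Real.sqrt ((a-d)^2+(b-e)^2+(c-f)^2) ≠ 0 := by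
    intro a b c d e f h
    have hpos : 0 < (a-d)^2+(b-e)^2+(c-f)^2 := by
      rcases lt_or_eq_of_le (by positivity : (0:ℝ) ≤ (a-d)^2+(b-e)^2+(c-f)^2) with h'|h'
      · exact h'
      · exfalso
        have h1 : a = d := by nlinarith [sq_nonneg (a-d), sq_nonneg (b-e), sq_nonneg (c-f)]
        have h2 : b = e := by nlinarith [sq_nonneg (a-d), sq_nonneg (b-e), sq_nonneg (c-f)]
        have h3 : c = f := by nlinarith [sq_nonneg (a-d), sq_nonneg (b-e), sq_nonneg (c-f)]
        exact h (by rw [h1, h2, h3])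
    exact ne_of_gt (Real.sqrt_pos.mpr hpos)
  have s1 := key _ _ _ _ _ _ hne1
  have s2 := key _ _ _ _ _ _ hne2
  have s3 := key _ _ _ _ _ _ hne3
  have s4 := key _ _ _ _ _ _ hne4
  have cancel : ∀ s D a : ℝ, s ≠ 0 → s * D * a / s = D * a := by
    intro s D a hs; field_simp
  rw [hm1, hm2, hm3, hm4]
  rw [cancel _ _ _ s1, cancel _ _ _ s2, cancel _ _ _ s3, cancel _ _ _ s4,
      cancel _ _ _ s1, cancel _ _ _ s2, cancel _ _ _ s3, cancel _ _ _ s4,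
      cancel _ _ _ s1, cancel _ _ _ s2, cancel _ _ _ s3, cancel _ _ _ s4]
  refine ⟨?_, ?_, ?_⟩ <;>
  · simp only [det4]
    ring
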